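/- For all n ≥ 7 and all integers I with (n-1)/3 ≤ I ≤ (n-2)/2, one has ∑_{i=0}^{I} n!/(i!·(n-2i-1)!·(i+1)!) < ∑_{i=0}^{I} n!/((i+1)!·(n-2i-2)!·(i+1)!). -/

import Mathlib

/-- The trinomial coefficient `n! / (a! b! c!)` (meant for `a + b + c = n`). -/
def trinom (n a b c : ℕ) : ℕ :=
  n.factorial / (a.factorial * b.factorial * c.factorial)

open Finset Nat Polynomial

/-- Choosing `a` then `b` out of the rest = choosing `b` then `a`. -/
lemma choose_swap (n a b : ℕ) :
    n.choose a * (n - a).choose b = n.choose b * (n - b).choose a := by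
  by_cases hab : a + b ≤ n
  · have ha : a ≤ n := le_trans (Nat.le_add_right _ _) hab
    have hb : b ≤ n := le_trans (Nat.le_add_left _ _) hab
    have hba : b ≤ n - a := by omega
    have hab' : a ≤ n - b := by omega
    have key : ∀ x y : ℕ, x + y ≤ n →
        (n.choose x * (n - x).choose y) * (x.factorial * y.factorial * (n - x - y).factorial)
          = n.factorial := by
      intro x y hxy
      have hx : x ≤ n := by omega
      have hy : y ≤ n - x := by omega
      have h1 := Nat.choose_mul_factorial_mul_factorial hx
      have h2 := Nat.choose_mul_factorial_mul_factorial hy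
      calc (n.choose x * (n - x).choose y) * (x.factorial * y.factorial * (n - x - y).factorial)
          = (n.choose x * x.factorial) * ((n - x).choose y * y.factorial * (n - x - y).factorial) := by ring
        _ = (n.choose x * x.factorial) * (n - x).factorial := by rw [h2]
        _ = n.factorial := h1
    have e1 := key a b hab
    have e2 := key b a (by omega)
    have hpos : 0 < a.factorial * b.factorial * (n - a - b).factorial :=
      Nat.mul_pos (Nat.mul_pos (Nat.factorial_pos _) (Nat.factorial_pos _)) (Nat.factorial_pos _)
    apply Nat.eq_of_mul_eq_mul_right hpos
    rw [e1]
    rw [show b.factorial * a.factorial * (n - b - a).factorial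
        = a.factorial * b.factorial * (n - a - b).factorial by
      rw [Nat.mul_comm b.factorial a.factorial, Nat.sub_sub, Nat.sub_sub, Nat.add_comm]] at e2
    rw [e2]
  · -- both sides are zero
    have h1 : n.choose a * (n - a).choose b = 0 := by
      rcases le_or_gt a n with h | h
      · have : n - a < b := by omega
        rw [Nat.choose_eq_zero_of_lt this, Nat.mul_zero]
      · rw [Nat.choose_eq_zero_of_lt h, Nat.zero_mul]
    have h2 : n.choose b * (n - b).choose a = 0 := by
      rcases le_or_gt b n with h | h
      · have : n - b < a := by omega
        rw [Nat.choose_eq_zero_of_lt this, Nat.mul_zero]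
      · rw [Nat.choose_eq_zero_of_lt h, Nat.zero_mul]
    rw [h1, h2]

lemma trinom_eq (n a b c : ℕ) (h : a + b + c = n) :
    trinom n a b c = n.choose a * (n - a).choose b := by
  have ha : a ≤ n := by omega
  have hb : b ≤ n - a := by omega
  have key : n.choose a * (n - a).choose b * (a.factorial * b.factorial * c.factorial)
      = n.factorial := by
    have h1 := Nat.choose_mul_factorial_mul_factorial ha
    have h2 := Nat.choose_mul_factorial_mul_factorial hb
    have hc : n - a - b = c := by omega
    rw [hc] at h2
    calc n.choose a * (n - a).choose b * (a.factorial * b.factorial * c.factorial)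
        = (n.choose a * a.factorial) * ((n - a).choose b * b.factorial * c.factorial) := by ring
      _ = (n.choose a * a.factorial) * (n - a).factorial := by rw [h2]
      _ = n.factorial := h1
  have hpos : 0 < a.factorial * b.factorial * c.factorial :=
    Nat.mul_pos (Nat.mul_pos (Nat.factorial_pos _) (Nat.factorial_pos _)) (Nat.factorial_pos _)
  rw [trinom, ← key, Nat.mul_div_cancel _ hpos]


noncomputable def cpoly (n m : ℕ) : ℕ :=
  (((1 : Polynomial ℕ) + X + X ^ 2) ^ n).coeff m

lemma coeff_q_pow (n m : ℕ) :
    cpoly n m = ∑ j ∈ range (n + 1), if j ≤ m then n.choose j * j.choose (m - j) else 0 := by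
  unfold cpoly
  have hq : ((1 : Polynomial ℕ) + X + X ^ 2) = (X + X ^ 2) + 1 := by ring
  rw [hq, add_pow, finset_sum_coeff]
  refine Finset.sum_congr rfl fun j _ => ?_
  have h1 : ((X : Polynomial ℕ) + X ^ 2) ^ j = (1 + X) ^ j * X ^ j := by
    rw [← mul_pow]; ring_nf
  rw [h1, one_pow, mul_one]
  rw [show ((n.choose j : Polynomial ℕ)) = Polynomial.C (n.choose j) by simp]
  rw [coeff_mul_C, coeff_mul_X_pow', coeff_one_add_X_pow]
  split_ifs with h
  · simp [Nat.mul_comm]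
  · simp

lemma cA (n : ℕ) :
    cpoly n (n + 1) = ∑ i ∈ range (n + 1), n.choose i * (n - i).choose (i + 1) := by
  rw [coeff_q_pow, ← Finset.sum_range_reflect]
  refine Finset.sum_congr rfl fun j hj => ?_
  have hj' : j ≤ n := by simpa using Nat.lt_succ_iff.mp (Finset.mem_range.mp hj)
  have h1 : n + 1 - j ≤ n + 1 := by omega
  rw [if_pos (by omega : n + 1 - 1 - j ≤ n + 1)]
  have e1 : n + 1 - 1 - j = n - j := by omega
  rw [e1, Nat.choose_symm hj']
  congr 1
  congr 1
  omega

lemma cB (n : ℕ) :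
    cpoly n n = ∑ i ∈ range (n + 1), n.choose i * (n - i).choose i := by
  rw [coeff_q_pow, ← Finset.sum_range_reflect]
  refine Finset.sum_congr rfl fun j hj => ?_
  have hj' : j ≤ n := by simpa using Nat.lt_succ_iff.mp (Finset.mem_range.mp hj)
  rw [if_pos (by omega : n + 1 - 1 - j ≤ n)]
  have e1 : n + 1 - 1 - j = n - j := by omega
  rw [e1, Nat.choose_symm hj', show n - (n - j) = j by omega]

/-- Coefficient above the centre: `c n (n+k) = ∑ C(n,i) C(n-i, i+k)`. -/
lemma cUp (n k : ℕ) :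
    cpoly n (n + k) = ∑ i ∈ range (n + 1), n.choose i * (n - i).choose (i + k) := by
  rw [coeff_q_pow, ← Finset.sum_range_reflect]
  refine Finset.sum_congr rfl fun j hj => ?_
  have hj' : j ≤ n := by simpa using Nat.lt_succ_iff.mp (Finset.mem_range.mp hj)
  rw [if_pos (by omega : n + 1 - 1 - j ≤ n + k)]
  have e1 : n + 1 - 1 - j = n - j := by omega
  rw [e1, Nat.choose_symm hj', show n + k - (n - j) = j + k by omega]

/-- Coefficient below the centre: `c (n+k) n = ∑ C(n+k,j) C(n+k-j, j+k)`. -/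
lemma cDown (n k : ℕ) :
    cpoly (n + k) n = ∑ j ∈ range (n + 1), (n + k).choose j * (n + k - j).choose (j + k) := by
  rw [coeff_q_pow]
  rw [← Finset.sum_subset (s₁ := range (n + 1))
      (by intro x hx; simp only [Finset.mem_range] at *; omega)
      (fun x hx hnx => by
        rw [if_neg]; simp only [Finset.mem_range] at *; omega)]
  rw [← Finset.sum_range_reflect]
  refine Finset.sum_congr rfl fun j hj => ?_
  have hj' : j ≤ n := by simpa using Nat.lt_succ_iff.mp (Finset.mem_range.mp hj)
  rw [if_pos (by omega : n + 1 - 1 - j ≤ n)]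
  have e1 : n + 1 - 1 - j = n - j := by omega
  rw [e1]
  have e2 : (n + k).choose (n - j) = (n + k).choose (j + k) := by
    rw [← Nat.choose_symm (by omega : n - j ≤ n + k), show n + k - (n - j) = j + k by omega]
  rw [e2, show n - (n - j) = j by omega]
  have e3 := choose_swap (n + k) (j + k) j
  rw [show n + k - (j + k) = n - j by omega] at e3
  rw [e3]

/-- Symmetry of the coefficients around the centre `n+k`. -/
lemma csym (n k : ℕ) : cpoly (n + k) n = cpoly (n + k) (n + k + k) := by
  have h1 : cpoly (n + k) (n + k + k) = ∑ i ∈ range (n + k + 1),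
      (n + k).choose i * (n + k - i).choose (i + k) := cUp (n + k) k
  rw [cDown, h1]
  refine Finset.sum_subset (by intro x hx; simp only [Finset.mem_range] at *; omega)
      (fun i hi hni => ?_)
  simp only [Finset.mem_range] at hi hni
  have : n + k - i < i + k := by omega
  rw [Nat.choose_eq_zero_of_lt this, Nat.mul_zero]

lemma crec (n m : ℕ) :
    cpoly (n + 1) (m + 2) = cpoly n (m + 2) + cpoly n (m + 1) + cpoly n m := by
  unfold cpoly
  rw [pow_succ, mul_add, mul_add, mul_one, coeff_add, coeff_add]
  have h1 : (((1 : Polynomial ℕ) + X + X ^ 2) ^ n * X).coeff (m + 2)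
      = (((1 : Polynomial ℕ) + X + X ^ 2) ^ n).coeff (m + 1) :=
    Polynomial.coeff_mul_X _ (m + 1)
  have h2 : (((1 : Polynomial ℕ) + X + X ^ 2) ^ n * X ^ 2).coeff (m + 2)
      = (((1 : Polynomial ℕ) + X + X ^ 2) ^ n).coeff m := by
    rw [coeff_mul_X_pow', if_pos (by omega)]
    norm_num
  rw [h1, h2]

lemma cmono (n : ℕ) : ∀ m, n ≤ m → cpoly n (m + 1) ≤ cpoly n m := by
  induction n with
  | zero =>
    intro m _
    have : cpoly 0 (m + 1) = 0 := by
      unfold cpoly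
      rw [pow_zero, Polynomial.coeff_one, if_neg (by omega)]
    omega
  | succ n ih =>
    intro m hm
    rcases Nat.lt_or_ge m 2 with h2 | h2
    · -- then n = 0, m = 1
      have hn : n = 0 := by omega
      have hm1 : m = 1 := by omega
      subst hn hm1
      have e1 : cpoly 1 2 = 1 := by
        unfold cpoly
        rw [pow_one]
        simp [Polynomial.coeff_one, Polynomial.coeff_X, Polynomial.coeff_X_pow]
      have e2 : cpoly 1 1 = 1 := by
        unfold cpoly
        rw [pow_one]
        simp [Polynomial.coeff_one, Polynomial.coeff_X, Polynomial.coeff_X_pow]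
      show cpoly 1 2 ≤ cpoly 1 1
      omega
    · obtain ⟨k, rfl⟩ : ∃ k, m = k + 2 := ⟨m - 2, by omega⟩
      have r1 : cpoly (n + 1) (k + 3) = cpoly n (k + 3) + cpoly n (k + 2) + cpoly n (k + 1) :=
        crec n (k + 1)
      have r2 : cpoly (n + 1) (k + 2) = cpoly n (k + 2) + cpoly n (k + 1) + cpoly n k :=
        crec n k
      have key : cpoly n (k + 3) ≤ cpoly n k := by
        rcases Nat.lt_or_ge n (k + 1) with hlt | hge
        · -- n ≤ k : chain three applications of ih
          have c1 : cpoly n (k + 3) ≤ cpoly n (k + 2) := ih (k + 2) (by omega)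
          have c2 : cpoly n (k + 2) ≤ cpoly n (k + 1) := ih (k + 1) (by omega)
          have c3 : cpoly n (k + 1) ≤ cpoly n k := ih k (by omega)
          omega
        · -- n = k + 1 (since n ≤ k + 1), use symmetry
          have hn : n = k + 1 := by omega
          subst hn
          have hs : cpoly (k + 1) k = cpoly (k + 1) (k + 2) := by
            have := csym k 1
            have e : k + 1 + 1 = k + 2 := rfl
            rw [e] at this
            exact this
          have c1 : cpoly (k + 1) (k + 3) ≤ cpoly (k + 1) (k + 2) := ih (k + 2) (by omega)
          omega
      show cpoly (n + 1) (k + 3) ≤ cpoly (n + 1) (k + 2)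
      omega

lemma cstep (j : ℕ) :
    cpoly (j + 4) (j + 4) + cpoly (j + 2) (j + 5)
      = cpoly (j + 4) (j + 5) + cpoly (j + 2) (j + 2) := by
  have e1 : cpoly (j + 4) (j + 4)
      = cpoly (j + 3) (j + 4) + cpoly (j + 3) (j + 3) + cpoly (j + 3) (j + 2) :=
    crec (j + 3) (j + 2)
  have e2 : cpoly (j + 3) (j + 4)
      = cpoly (j + 2) (j + 4) + cpoly (j + 2) (j + 3) + cpoly (j + 2) (j + 2) :=
    crec (j + 2) (j + 2)
  have e3 : cpoly (j + 3) (j + 3)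
      = cpoly (j + 2) (j + 3) + cpoly (j + 2) (j + 2) + cpoly (j + 2) (j + 1) :=
    crec (j + 2) (j + 1)
  have e4 : cpoly (j + 3) (j + 2)
      = cpoly (j + 2) (j + 2) + cpoly (j + 2) (j + 1) + cpoly (j + 2) j :=
    crec (j + 2) j
  have e5 : cpoly (j + 4) (j + 5)
      = cpoly (j + 3) (j + 5) + cpoly (j + 3) (j + 4) + cpoly (j + 3) (j + 3) :=
    crec (j + 3) (j + 3)
  have e6 : cpoly (j + 3) (j + 5)
      = cpoly (j + 2) (j + 5) + cpoly (j + 2) (j + 4) + cpoly (j + 2) (j + 3) :=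
    crec (j + 2) (j + 3)
  have s1 : cpoly (j + 2) (j + 1) = cpoly (j + 2) (j + 3) := csym (j + 1) 1
  have s2 : cpoly (j + 2) j = cpoly (j + 2) (j + 4) := csym j 2
  omega

lemma main_c : ∀ n, 7 ≤ n → cpoly n (n + 1) + 2 ≤ cpoly n n := by
  intro n
  induction n using Nat.strong_induction_on with
  | _ n ih =>
    intro hn
    rcases Nat.lt_or_ge n 9 with h9 | h9
    · -- n = 7 or n = 8 : explicit computation
      interval_cases n
      · have h1 : cpoly 7 (7 + 1) = _ := cUp 7 1
        have h2 : cpoly 7 (7 + 0) = _ := cUp 7 0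
        rw [show (7:ℕ) + 1 = 8 from rfl] at h1
        rw [show (7:ℕ) + 0 = 7 from rfl] at h2
        rw [h1, h2]
        decide
      · have h1 : cpoly 8 (8 + 1) = _ := cUp 8 1
        have h2 : cpoly 8 (8 + 0) = _ := cUp 8 0
        rw [show (8:ℕ) + 1 = 9 from rfl] at h1
        rw [show (8:ℕ) + 0 = 8 from rfl] at h2
        rw [h1, h2]
        decide
    · obtain ⟨j, rfl⟩ : ∃ j, n = j + 4 := ⟨n - 4, by omega⟩
      have hstep := cstep j
      have hIH : cpoly (j + 2) (j + 3) + 2 ≤ cpoly (j + 2) (j + 2) := ih (j + 2) (by omega) (by omega)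
      have m1 : cpoly (j + 2) (j + 5) ≤ cpoly (j + 2) (j + 4) := cmono (j + 2) (j + 4) (by omega)
      have m2 : cpoly (j + 2) (j + 4) ≤ cpoly (j + 2) (j + 3) := cmono (j + 2) (j + 3) (by omega)
      show cpoly (j + 4) (j + 5) + 2 ≤ cpoly (j + 4) (j + 4)
      omega

lemma key_identity (n i : ℕ) :
    n.choose (i + 1) * (n - i - 1).choose (i + 1) * (i + 1)
      = n.choose i * (n - i).choose (i + 1) * (n - 2 * i - 1) := by
  rcases Nat.lt_or_ge n (2 * i + 2) with hlt | hge
  · have h1 : (n - i - 1).choose (i + 1) = 0 := Nat.choose_eq_zero_of_lt (by omega)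
    have h2 : n - 2 * i - 1 = 0 := by omega
    rw [h1, h2]
    ring
  · have e0 : n - i - 1 + 1 = n - i := by omega
    have A : n.choose (i + 1) * (i + 1) = n.choose i * (n - i) :=
      Nat.choose_succ_right_eq n i
    have B : (n - i) * (n - i - 1).choose (i + 1) = (n - i).choose (i + 2) * (i + 2) := by
      have hB := Nat.add_one_mul_choose_eq (n - i - 1) (i + 1)
      rw [e0] at hB
      exact hB
    have Cc : (n - i).choose (i + 2) * (i + 2) = (n - i).choose (i + 1) * (n - i - (i + 1)) :=
      Nat.choose_succ_right_eq (n - i) (i + 1)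
    have e1 : n - i - (i + 1) = n - 2 * i - 1 := by omega
    calc n.choose (i + 1) * (n - i - 1).choose (i + 1) * (i + 1)
        = (n.choose (i + 1) * (i + 1)) * (n - i - 1).choose (i + 1) := by ring
      _ = (n.choose i * (n - i)) * (n - i - 1).choose (i + 1) := by rw [A]
      _ = n.choose i * ((n - i) * (n - i - 1).choose (i + 1)) := by ring
      _ = n.choose i * ((n - i).choose (i + 2) * (i + 2)) := by rw [B]
      _ = n.choose i * ((n - i).choose (i + 1) * (n - i - (i + 1))) := by rw [Cc]
      _ = n.choose i * (n - i).choose (i + 1) * (n - 2 * i - 1) := by rw [e1]; ring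

lemma key_le (n i : ℕ) (h : n ≤ 3 * i + 2) :
    n.choose (i + 1) * (n - i - 1).choose (i + 1) ≤ n.choose i * (n - i).choose (i + 1) := by
  have hid := key_identity n i
  have hle : n - 2 * i - 1 ≤ i + 1 := by omega
  have : n.choose (i + 1) * (n - i - 1).choose (i + 1) * (i + 1)
      ≤ n.choose i * (n - i).choose (i + 1) * (i + 1) := by
    rw [hid]
    exact Nat.mul_le_mul_left _ hle
  exact Nat.le_of_mul_le_mul_right this (by omega)

/-- For all `n ≥ 7` and integers `I` with `(n-1)/3 ≤ I ≤ (n-2)/2`,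
`∑_{i=0}^{I} n!/(i!(n-2i-1)!(i+1)!) < ∑_{i=0}^{I} n!/((i+1)!(n-2i-2)!(i+1)!)`. -/
theorem trinomial_sum_strict_ineq_small (n I : ℕ) (hn : 7 ≤ n)
    (hI1 : n - 1 ≤ 3 * I) (hI2 : 2 * I ≤ n - 2) :
    ∑ i ∈ Finset.range (I + 1), trinom n i (n - 2 * i - 1) (i + 1) <
    ∑ i ∈ Finset.range (I + 1), trinom n (i + 1) (n - 2 * i - 2) (i + 1) := by
  have hL : ∑ i ∈ range (I + 1), trinom n i (n - 2 * i - 1) (i + 1)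
      = ∑ i ∈ range (I + 1), n.choose i * (n - i).choose (i + 1) := by
    refine Finset.sum_congr rfl fun i hi => ?_
    have hi' : i ≤ I := Nat.lt_succ_iff.mp (Finset.mem_range.mp hi)
    have hsum : i + (n - 2 * i - 1) + (i + 1) = n := by omega
    rw [trinom_eq n i (n - 2 * i - 1) (i + 1) hsum]
    congr 1
    rw [show n - 2 * i - 1 = (n - i) - (i + 1) by omega, Nat.choose_symm (by omega)]
  have hR : ∑ i ∈ range (I + 1), trinom n (i + 1) (n - 2 * i - 2) (i + 1)
      = ∑ i ∈ range (I + 1), n.choose (i + 1) * (n - i - 1).choose (i + 1) := by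
    refine Finset.sum_congr rfl fun i hi => ?_
    have hi' : i ≤ I := Nat.lt_succ_iff.mp (Finset.mem_range.mp hi)
    have hsum : (i + 1) + (n - 2 * i - 2) + (i + 1) = n := by omega
    rw [trinom_eq n (i + 1) (n - 2 * i - 2) (i + 1) hsum]
    congr 1
    rw [show n - (i + 1) = n - i - 1 by omega,
      show n - 2 * i - 2 = (n - i - 1) - (i + 1) by omega, Nat.choose_symm (by omega)]
  rw [hL, hR]
  have hsplitA : ∑ i ∈ range (I + 1), n.choose i * (n - i).choose (i + 1)
      + ∑ i ∈ Finset.Ico (I + 1) (n + 1), n.choose i * (n - i).choose (i + 1)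
      = ∑ i ∈ range (n + 1), n.choose i * (n - i).choose (i + 1) := by
    simp only [Finset.range_eq_Ico]
    exact Finset.sum_Ico_consecutive _ (by omega) (by omega)
  have hsplitB : ∑ i ∈ range (I + 1), n.choose (i + 1) * (n - i - 1).choose (i + 1)
      + ∑ i ∈ Finset.Ico (I + 1) n, n.choose (i + 1) * (n - i - 1).choose (i + 1)
      = ∑ i ∈ range n, n.choose (i + 1) * (n - i - 1).choose (i + 1) := by
    simp only [Finset.range_eq_Ico]
    exact Finset.sum_Ico_consecutive _ (by omega) (by omega)
  have hA : ∑ i ∈ range (n + 1), n.choose i * (n - i).choose (i + 1) = cpoly n (n + 1) :=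
    (cUp n 1).symm
  have hB : cpoly n n = ∑ i ∈ range n, n.choose (i + 1) * (n - i - 1).choose (i + 1) + 1 := by
    rw [cB, Finset.sum_range_succ']
    have h1 : ∑ i ∈ range n, n.choose (i + 1) * (n - (i + 1)).choose (i + 1)
        = ∑ i ∈ range n, n.choose (i + 1) * (n - i - 1).choose (i + 1) :=
      Finset.sum_congr rfl fun i _ => by rw [← Nat.sub_sub]
    rw [h1]
    simp
  have htail : ∑ i ∈ Finset.Ico (I + 1) n, n.choose (i + 1) * (n - i - 1).choose (i + 1)
      ≤ ∑ i ∈ Finset.Ico (I + 1) (n + 1), n.choose i * (n - i).choose (i + 1) := by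
    calc ∑ i ∈ Finset.Ico (I + 1) n, n.choose (i + 1) * (n - i - 1).choose (i + 1)
        ≤ ∑ i ∈ Finset.Ico (I + 1) n, n.choose i * (n - i).choose (i + 1) :=
          Finset.sum_le_sum fun i hi =>
            key_le n i (by have := (Finset.mem_Ico.mp hi).1; omega)
      _ ≤ ∑ i ∈ Finset.Ico (I + 1) (n + 1), n.choose i * (n - i).choose (i + 1) :=
          Finset.sum_le_sum_of_subset (Finset.Ico_subset_Ico le_rfl (by omega))
  have hmain := main_c n hn
  omega
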